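/- arXiv:2410.11113 — 2 statements merged into one kernel-verified Lean document; each statement's English description precedes it below -/
import Mathlib

section
/- Fix $B \ge 2$. Define $g_a(b) := -\frac{e^a}{1+e^a}(b - a) + \log\left(\frac{1+e^b}{1+e^a}\right)$ for $a, b \in [-B^2, B^2]$. Then $\frac{1}{2(e^{B^2} + e^{-B^2} + 2)} (b-a)^2 \le g_a(b) \le \frac{1}{4}(b-a)^2$ for all $a, b \in [-B^2, B^2]$. -/
open Real

lemma tangent_le_aux {S : Set ℝ} {f : ℝ → ℝ} {f' a b : ℝ}
    (hfc : ConvexOn ℝ S f) (hf : HasDerivAt f f' a) (ha : a ∈ S) (hb : b ∈ S) :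
    f a + f' * (b - a) ≤ f b := by
  rcases lt_trichotomy a b with h | h | h
  · have h1 := hfc.le_slope_of_hasDerivAt ha hb h hf
    rw [slope_def_field] at h1
    have h2 : (0:ℝ) < b - a := by linarith
    have := (le_div_iff₀ h2).mp h1
    linarith
  · simp [h]
  · have h1 := hfc.slope_le_of_hasDerivAt hb ha h hf
    rw [slope_def_field] at h1
    have h2 : (0:ℝ) < a - b := by linarith
    have := (div_le_iff₀ h2).mp h1
    linarith

lemma hasDerivAt_g (x : ℝ) :
    HasDerivAt (fun x => Real.log (1 + exp x)) (exp x / (1 + exp x)) x :=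
  (((hasDerivAt_exp x).const_add 1).log (by positivity))

lemma hasDerivAt_g' (x : ℝ) :
    HasDerivAt (fun x => exp x / (1 + exp x)) (exp x / (1 + exp x) ^ 2) x := by
  have h := (hasDerivAt_exp x).div ((hasDerivAt_exp x).const_add 1)
    (by positivity)
  refine h.congr_deriv ?_
  have : (1 : ℝ) + exp x ≠ 0 := by positivity
  field_simp
  ring

lemma hasDerivAt_h2 (m x : ℝ) :
    HasDerivAt (fun x => Real.log (1 + exp x) - m / 2 * x ^ 2)
      (exp x / (1 + exp x) - m * x) x := by
  have h := (hasDerivAt_g x).sub ((hasDerivAt_pow 2 x).const_mul (m / 2))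
  refine h.congr_deriv ?_
  norm_num
  ring

lemma hasDerivAt_h2' (m x : ℝ) :
    HasDerivAt (fun x => exp x / (1 + exp x) - m * x)
      (exp x / (1 + exp x) ^ 2 - m) x := by
  have h := (hasDerivAt_g' x).sub ((hasDerivAt_id x).const_mul m)
  refine h.congr_deriv ?_
  simp

lemma hasDerivAt_h1 (x : ℝ) :
    HasDerivAt (fun x => x ^ 2 / 8 - Real.log (1 + exp x))
      (x / 4 - exp x / (1 + exp x)) x := by
  have h := ((hasDerivAt_pow 2 x).div_const 8).sub (hasDerivAt_g x)
  refine h.congr_deriv ?_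
  norm_num
  ring

lemma hasDerivAt_h1' (x : ℝ) :
    HasDerivAt (fun x => x / 4 - exp x / (1 + exp x))
      (1 / 4 - exp x / (1 + exp x) ^ 2) x := by
  have h := ((hasDerivAt_id x).div_const 4).sub (hasDerivAt_g' x)
  exact h

lemma contOn_g (S : Set ℝ) : ContinuousOn (fun x => Real.log (1 + exp x)) S :=
  ContinuousOn.log (by fun_prop) (fun x _ => by positivity)

theorem stmt_7 (B : ℝ) (hB : 2 ≤ B) (a b : ℝ)
    (ha : a ∈ Set.Icc (-(B ^ 2)) (B ^ 2)) (hb : b ∈ Set.Icc (-(B ^ 2)) (B ^ 2)) :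
    (1 / (2 * (exp (B ^ 2) + exp (-(B ^ 2)) + 2))) * (b - a) ^ 2 ≤
        (-(exp a / (1 + exp a)) * (b - a) + Real.log ((1 + exp b) / (1 + exp a))) ∧
      (-(exp a / (1 + exp a)) * (b - a) + Real.log ((1 + exp b) / (1 + exp a))) ≤
        (1 / 4) * (b - a) ^ 2 := by
  set E : ℝ := exp (B ^ 2) + exp (-(B ^ 2)) + 2 with hE
  have hEpos : 0 < E := by positivity
  set m : ℝ := 1 / E with hm
  have hmpos : 0 < m := by positivity
  set D : Set ℝ := Set.Icc (-(B ^ 2)) (B ^ 2) with hD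
  have hDconv : Convex ℝ D := convex_Icc _ _
  have hlog : Real.log ((1 + exp b) / (1 + exp a))
      = Real.log (1 + exp b) - Real.log (1 + exp a) :=
    Real.log_div (by positivity) (by positivity)
  -- convexity of x ↦ log(1+eˣ) - (m/2) x²  on D
  have hconv2 : ConvexOn ℝ D (fun x => Real.log (1 + exp x) - m / 2 * x ^ 2) := by
    apply convexOn_of_hasDerivWithinAt2_nonneg hDconv
      (f' := fun x => exp x / (1 + exp x) - m * x)
      (f'' := fun x => exp x / (1 + exp x) ^ 2 - m)
    · exact (contOn_g D).sub (by fun_prop)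
    · exact fun x _ => (hasDerivAt_h2 m x).hasDerivWithinAt
    · exact fun x _ => (hasDerivAt_h2' m x).hasDerivWithinAt
    · intro x hx
      rw [hD, interior_Icc] at hx
      have hx1 : exp x ≤ exp (B ^ 2) := exp_le_exp.2 hx.2.le
      have hx2 : exp (-x) ≤ exp (B ^ 2) := exp_le_exp.2 (by linarith [hx.1])
      have h1 : exp x * exp (-x) = 1 := by rw [← exp_add]; simp
      have h2 : exp (B ^ 2) * exp (-(B ^ 2)) = 1 := by rw [← exp_add]; simp
      have key : exp x + exp (-x) ≤ exp (B ^ 2) + exp (-(B ^ 2)) := by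
        nlinarith [mul_nonneg (sub_nonneg.2 hx1)
          (sub_nonneg.2 (show exp (-(B ^ 2)) * exp (-x) ≤ 1 by
            nlinarith [exp_pos (-(B^2)), exp_pos (-x), exp_pos (B^2)])),
          exp_pos x, exp_pos (-x), exp_pos (B ^ 2), exp_pos (-(B ^ 2))]
      have hquad : (1 + exp x) ^ 2 = exp x * (exp x + exp (-x) + 2) := by
        nlinarith [h1]
      have hne : (0:ℝ) < (1 + exp x) ^ 2 := by positivity
      have : m ≤ exp x / (1 + exp x) ^ 2 := by
        rw [hm, div_le_div_iff₀ hEpos hne, one_mul, hquad]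
        have : exp x * (exp x + exp (-x) + 2) ≤ exp x * E := by
          apply mul_le_mul_of_nonneg_left _ (exp_pos x).le
          rw [hE]; linarith
        linarith
      linarith
  -- convexity of x ↦ x²/8 - log(1+eˣ)  on D
  have hconv1 : ConvexOn ℝ D (fun x => x ^ 2 / 8 - Real.log (1 + exp x)) := by
    apply convexOn_of_hasDerivWithinAt2_nonneg hDconv
      (f' := fun x => x / 4 - exp x / (1 + exp x))
      (f'' := fun x => 1 / 4 - exp x / (1 + exp x) ^ 2)
    · exact ContinuousOn.sub (by fun_prop) (contOn_g D)
    · exact fun x _ => (hasDerivAt_h1 x).hasDerivWithinAt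
    · exact fun x _ => (hasDerivAt_h1' x).hasDerivWithinAt
    · intro x hx
      have hne : (0:ℝ) < (1 + exp x) ^ 2 := by positivity
      have : exp x / (1 + exp x) ^ 2 ≤ 1 / 4 := by
        rw [div_le_div_iff₀ hne (by norm_num)]
        nlinarith [sq_nonneg (1 - exp x)]
      linarith
  constructor
  · have ht := tangent_le_aux hconv2 (hasDerivAt_h2 m a) ha hb
    beta_reduce at ht
    rw [hlog]
    have hme : 1 / (2 * E) = m / 2 := by rw [hm]; field_simp
    rw [hme]
    nlinarith [ht]
  · have ht := tangent_le_aux hconv1 (hasDerivAt_h1 a) ha hb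
    beta_reduce at ht
    rw [hlog]
    nlinarith [ht]
end

section
/- Let $Y$ be a $\{0,1\}$-valued random variable and $X$ a random variable with $\mathbb{E}[Y \mid X] = \frac{e^{B f_0(X)}}{1 + e^{B f_0(X)}}$ for a constant $B \ge 2$ and a measurable function $f_0$ with $\|f_0\|_\infty \le 1$. Define the logistic criterion $\ell(Z, f) = -Y B f(X) + \log(1 + e^{B f(X)})$. Then for any measurable $f$ with $\|f\|_\infty \le B$, $c_1 \, \mathbb{E}[(f(X) - f_0(X))^2] \le \mathbb{E}[\ell(Z, f)] - \mathbb{E}[\ell(Z, f_0)] \le \frac{B^2}{4} \mathbb{E}[(f(X) - f_0(X))^2]$, where $c_1 = \frac{B^2}{2(e^{B^2} + e^{-B^2} + 2)}$. -/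
open MeasureTheory Real Set

noncomputable def lphi (x : ℝ) : ℝ := Real.log (1 + Real.exp x)
noncomputable def lsig (x : ℝ) : ℝ := Real.exp x / (1 + Real.exp x)

lemma one_add_exp_pos (x : ℝ) : 0 < 1 + Real.exp x := by positivity

lemma hasDerivAt_lphi (x : ℝ) : HasDerivAt lphi (lsig x) x := by
  have h := ((Real.hasDerivAt_exp x).const_add 1).log (ne_of_gt (one_add_exp_pos x))
  exact h

lemma hasDerivAt_lsig (x : ℝ) :
    HasDerivAt lsig (Real.exp x / (1 + Real.exp x) ^ 2) x := by
  have h := (Real.hasDerivAt_exp x).div ((Real.hasDerivAt_exp x).const_add 1)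
    (ne_of_gt (one_add_exp_pos x))
  exact h.congr_deriv (by ring)

lemma lsig_deriv_eq (x : ℝ) :
    Real.exp x / (1 + Real.exp x) ^ 2 = 1 / (Real.exp x + Real.exp (-x) + 2) := by
  have h1 : Real.exp x * Real.exp (-x) = 1 := by
    rw [← Real.exp_add]; simp
  have h2 : (1 + Real.exp x) ^ 2 = Real.exp x * (Real.exp x + Real.exp (-x) + 2) := by
    nlinarith
  rw [h2, div_mul_eq_div_div, div_self (ne_of_gt (Real.exp_pos x))]

lemma cosh_bound {x M : ℝ} (h : |x| ≤ M) :
    Real.exp x + Real.exp (-x) ≤ Real.exp M + Real.exp (-M) := by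
  have := Real.cosh_le_cosh.2 (by rwa [abs_of_nonneg (le_trans (abs_nonneg x) h)] : |x| ≤ |M|)
  rw [Real.cosh_eq, Real.cosh_eq] at this
  linarith

lemma tangent_le {S : Set ℝ} {f : ℝ → ℝ} {x y f' : ℝ} (hfc : ConvexOn ℝ S f)
    (hx : x ∈ S) (hy : y ∈ S) (hd : HasDerivAt f f' x) :
    f x + f' * (y - x) ≤ f y := by
  rcases lt_trichotomy x y with h | h | h
  · have hs := hfc.le_slope_of_hasDerivAt hx hy h hd
    rw [slope_def_field] at hs
    have h2 := (le_div_iff₀ (by linarith : (0:ℝ) < y - x)).mp hs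
    linarith
  · simp [h]
  · have hs := hfc.slope_le_of_hasDerivAt hy hx h hd
    rw [slope_def_field] at hs
    have h2 := (div_le_iff₀ (by linarith : (0:ℝ) < x - y)).mp hs
    linarith

lemma key_bounds {M a b : ℝ} (hM : 0 < M) (ha : |a| ≤ M) (hb : |b| ≤ M) :
    1 / (2 * (Real.exp M + Real.exp (-M) + 2)) * (b - a) ^ 2 ≤
      lphi b - lphi a - lsig a * (b - a) ∧
    lphi b - lphi a - lsig a * (b - a) ≤ 1 / 8 * (b - a) ^ 2 := by
  have hE : (0:ℝ) < Real.exp M + Real.exp (-M) + 2 := by positivity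
  set c : ℝ := 1 / (Real.exp M + Real.exp (-M) + 2) with hc
  have hamem : a ∈ Icc (-M) M := abs_le.mp ha |>.imp (fun h => h) (fun h => h) |> fun ⟨h1, h2⟩ => ⟨h1, h2⟩
  have hbmem : b ∈ Icc (-M) M := by
    rcases abs_le.mp hb with ⟨h1, h2⟩; exact ⟨h1, h2⟩
  constructor
  · -- lower bound via convexity of ψ = lphi - c/2 x² on Icc
    set ψ : ℝ → ℝ := fun x => lphi x - c / 2 * x ^ 2 with hψ
    have hdψ : ∀ x, HasDerivAt ψ (lsig x - c * x) x := by
      intro x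
      have h2 : HasDerivAt (fun x : ℝ => c / 2 * x ^ 2) (c / 2 * (2 * x)) x := by
        exact ((hasDerivAt_pow 2 x).const_mul (c/2)).congr_deriv (by push_cast; ring)
      exact ((hasDerivAt_lphi x).sub h2).congr_deriv (by ring)
    have hconv : ConvexOn ℝ (Icc (-M) M) ψ := by
      apply convexOn_of_hasDerivWithinAt2_nonneg (convex_Icc _ _)
        (f' := fun x => lsig x - c * x) (f'' := fun x => Real.exp x / (1 + Real.exp x) ^ 2 - c)
      · exact fun x hx => ((hdψ x).continuousAt).continuousWithinAt
      · exact fun x hx => (hdψ x).hasDerivWithinAt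
      · intro x hx
        exact (((hasDerivAt_lsig x).sub ((hasDerivAt_id x).const_mul c)).congr_deriv
          (by ring)).hasDerivWithinAt
      · intro x hx
        rw [interior_Icc] at hx
        rw [lsig_deriv_eq, hc, sub_nonneg]
        apply one_div_le_one_div_of_le (by positivity)
        have := cosh_bound (x := x) (M := M) (abs_le.mpr ⟨hx.1.le, hx.2.le⟩)
        linarith
    have := tangent_le hconv hamem hbmem (hdψ a)
    simp only [hψ] at this
    have hcc : c = 1 / (Real.exp M + Real.exp (-M) + 2) := hc
    have : lphi a - c / 2 * a ^ 2 + (lsig a - c * a) * (b - a) ≤ lphi b - c / 2 * b ^ 2 := this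
    calc 1 / (2 * (Real.exp M + Real.exp (-M) + 2)) * (b - a) ^ 2
        = c / 2 * (b - a) ^ 2 := by rw [hcc, one_div, one_div, mul_inv]; ring
      _ ≤ lphi b - lphi a - lsig a * (b - a) := by nlinarith
  · -- upper bound via convexity of χ = x²/8 - lphi on univ
    set χ : ℝ → ℝ := fun x => x ^ 2 / 8 - lphi x with hχ
    have hdχ : ∀ x, HasDerivAt χ (x / 4 - lsig x) x := by
      intro x
      have h2 : HasDerivAt (fun x : ℝ => x ^ 2 / 8) (x / 4) x := by
        exact ((hasDerivAt_pow 2 x).div_const 8).congr_deriv (by push_cast; ring)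
      exact h2.sub (hasDerivAt_lphi x)
    have hconv : ConvexOn ℝ univ χ := by
      apply convexOn_of_hasDerivWithinAt2_nonneg convex_univ
        (f' := fun x => x / 4 - lsig x) (f'' := fun x => 1 / 4 - Real.exp x / (1 + Real.exp x) ^ 2)
      · exact fun x hx => ((hdχ x).continuousAt).continuousWithinAt
      · exact fun x hx => (hdχ x).hasDerivWithinAt
      · intro x hx
        exact ((((hasDerivAt_id x).div_const 4).sub (hasDerivAt_lsig x)).congr_deriv
          (by ring)).hasDerivWithinAt
      · intro x hx
        rw [sub_nonneg, div_le_div_iff₀ (by positivity) (by norm_num)]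
        nlinarith [sq_nonneg (1 - Real.exp x), Real.exp_pos x]
    have := tangent_le hconv (mem_univ a) (mem_univ b) (hdχ a)
    simp only [hχ] at this
    nlinarith

lemma lphi_nonneg (x : ℝ) : 0 ≤ lphi x :=
  Real.log_nonneg (by linarith [Real.exp_pos x])

lemma lphi_le {x M : ℝ} (hM : 0 ≤ M) (h : x ≤ M) : lphi x ≤ M + 1 := by
  have e2 : (1:ℝ) ≤ Real.exp M := Real.one_le_exp hM
  have h1 : 1 + Real.exp x ≤ Real.exp (M + 1) := by
    rw [Real.exp_add]
    have e1 : Real.exp x ≤ Real.exp M := Real.exp_le_exp.mpr h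
    nlinarith [Real.exp_one_gt_d9]
  calc lphi x ≤ Real.log (Real.exp (M + 1)) := Real.log_le_log (one_add_exp_pos x) h1
    _ = M + 1 := Real.log_exp _

lemma integrable_bdd {Ω : Type*} [MeasurableSpace Ω] {μ : Measure Ω} [IsFiniteMeasure μ]
    {g : Ω → ℝ} (hg : AEStronglyMeasurable g μ) (C : ℝ) (h : ∀ ω, |g ω| ≤ C) :
    Integrable g μ :=
  (integrable_const C).mono' hg (Filter.Eventually.of_forall
    (fun ω => by simpa [Real.norm_eq_abs] using h ω))

lemma continuous_lphi : Continuous lphi :=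
  continuous_iff_continuousAt.mpr fun x => (hasDerivAt_lphi x).continuousAt

lemma continuous_lsig : Continuous lsig :=
  continuous_iff_continuousAt.mpr fun x => (hasDerivAt_lsig x).continuousAt

theorem stmt_10 {Ω 𝓧 : Type*} [MeasurableSpace Ω] [MeasurableSpace 𝓧]
    (μ : Measure Ω) [IsProbabilityMeasure μ]
    (X : Ω → 𝓧) (hX : Measurable X)
    (Y : Ω → ℝ) (hY01 : ∀ ω, Y ω = 0 ∨ Y ω = 1)
    (B : ℝ) (hB : 2 ≤ B)
    (f0 : 𝓧 → ℝ) (hf0meas : Measurable f0) (hf0bdd : ∀ x, |f0 x| ≤ 1)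
    (hcond : (fun ω => exp (B * f0 (X ω)) / (1 + exp (B * f0 (X ω)))) =ᵐ[μ]
      μ[Y | MeasurableSpace.comap X inferInstance]) :
    ∀ f : 𝓧 → ℝ, Measurable f → (∀ x, |f x| ≤ B) →
      (B ^ 2 / (2 * (exp (B ^ 2) + exp (-(B ^ 2)) + 2))) *
          ∫ ω, (f (X ω) - f0 (X ω)) ^ 2 ∂μ ≤
        (∫ ω, (-(Y ω * B * f (X ω)) + Real.log (1 + exp (B * f (X ω)))) ∂μ) -
          (∫ ω, (-(Y ω * B * f0 (X ω)) + Real.log (1 + exp (B * f0 (X ω)))) ∂μ) ∧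
      (∫ ω, (-(Y ω * B * f (X ω)) + Real.log (1 + exp (B * f (X ω)))) ∂μ) -
          (∫ ω, (-(Y ω * B * f0 (X ω)) + Real.log (1 + exp (B * f0 (X ω)))) ∂μ) ≤
        (B ^ 2 / 4) * ∫ ω, (f (X ω) - f0 (X ω)) ^ 2 ∂μ := by
  intro f hfmeas hfbdd
  have hB0 : (0:ℝ) < B := by linarith
  have hm : MeasurableSpace.comap X inferInstance ≤ ‹MeasurableSpace Ω› := hX.comap_le
  haveI : SigmaFinite (μ.trim hm) := inferInstance
  have hYabs : ∀ ω, |Y ω| ≤ 1 := by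
    intro ω; rcases hY01 ω with h | h <;> simp [h]
  have hYint : Integrable Y μ := by
    by_contra hni
    have h0 : μ[Y|MeasurableSpace.comap X inferInstance] = 0 := condExp_of_not_integrable hni
    rw [h0] at hcond
    have : (ae μ).NeBot := ae_neBot.mpr (IsProbabilityMeasure.ne_zero μ)
    obtain ⟨ω, hω⟩ := hcond.exists
    simp only [Pi.zero_apply] at hω
    have hpos := div_pos (Real.exp_pos (B * f0 (X ω))) (one_add_exp_pos (B * f0 (X ω)))
    rw [hω] at hpos
    exact lt_irrefl _ hpos
  have hYaesm := hYint.aestronglyMeasurable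
  have ha_bd : ∀ ω, |B * f0 (X ω)| ≤ B ^ 2 := by
    intro ω
    have := hf0bdd (X ω)
    rw [abs_mul, abs_of_pos hB0]
    nlinarith
  have hb_bd : ∀ ω, |B * f (X ω)| ≤ B ^ 2 := by
    intro ω
    have := hfbdd (X ω)
    rw [abs_mul, abs_of_pos hB0]
    nlinarith
  have hM : (0:ℝ) < B ^ 2 := by positivity
  have hXm : Measurable[MeasurableSpace.comap X inferInstance] X :=
    measurable_iff_comap_le.mpr le_rfl
  have hameas : Measurable (fun ω => B * f0 (X ω)) := (hf0meas.comp hX).const_mul B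
  have hbmeas : Measurable (fun ω => B * f (X ω)) := (hfmeas.comp hX).const_mul B
  have hdmeas : Measurable (fun ω => f (X ω) - f0 (X ω)) :=
    (hfmeas.comp hX).sub (hf0meas.comp hX)
  have hbam : StronglyMeasurable[MeasurableSpace.comap X inferInstance]
      (fun ω => B * f (X ω) - B * f0 (X ω)) := by
    have : Measurable[MeasurableSpace.comap X inferInstance]
        (fun ω => B * f (X ω) - B * f0 (X ω)) :=
      ((hfmeas.const_mul B).sub (hf0meas.const_mul B)).comp hXm
    exact this.stronglyMeasurable
  have hba_bd : ∀ ω, ‖B * f (X ω) - B * f0 (X ω)‖ ≤ B ^ 2 + B ^ 2 := by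
    intro ω
    rw [Real.norm_eq_abs]
    calc |B * f (X ω) - B * f0 (X ω)| ≤ |B * f (X ω)| + |B * f0 (X ω)| := abs_sub _ _
      _ ≤ B ^ 2 + B ^ 2 := add_le_add (hb_bd ω) (ha_bd ω)
  have hmul := condExp_stronglyMeasurable_mul_of_bound hm hbam hYint (B ^ 2 + B ^ 2)
    (Filter.Eventually.of_forall hba_bd)
  have hint_baY : Integrable (fun ω => (B * f (X ω) - B * f0 (X ω)) * Y ω) μ :=
    hYint.bdd_mul ((hbmeas.sub hameas).aestronglyMeasurable)
      (Filter.Eventually.of_forall hba_bd)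
  have hlsig_bd : ∀ x : ℝ, |lsig x| ≤ 1 := by
    intro x
    have h0 : (0:ℝ) ≤ lsig x := by
      rw [lsig]; positivity
    rw [abs_of_nonneg h0, lsig, div_le_one (one_add_exp_pos x)]
    linarith
  have hint_balsig :
      Integrable (fun ω => (B * f (X ω) - B * f0 (X ω)) * lsig (B * f0 (X ω))) μ := by
    apply integrable_bdd (((hbmeas.sub hameas).mul
      (continuous_lsig.measurable.comp hameas)).aestronglyMeasurable) ((B ^ 2 + B ^ 2) * 1)
    intro ω
    show |(B * f (X ω) - B * f0 (X ω)) * lsig (B * f0 (X ω))| ≤ _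
    rw [abs_mul]
    exact mul_le_mul (by simpa [Real.norm_eq_abs] using hba_bd ω) (hlsig_bd _)
      (abs_nonneg _) (by positivity)
  have key_int : ∫ ω, (B * f (X ω) - B * f0 (X ω)) * Y ω ∂μ
      = ∫ ω, (B * f (X ω) - B * f0 (X ω)) * lsig (B * f0 (X ω)) ∂μ := by
    have h1 : ∫ ω, (B * f (X ω) - B * f0 (X ω)) * Y ω ∂μ = ∫ ω, (μ[(fun ω => B * f (X ω) - B * f0 (X ω)) * Y|MeasurableSpace.comap X inferInstance]) ω ∂μ :=
      (integral_condExp hm).symm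
    rw [h1, integral_congr_ae hmul]
    apply integral_congr_ae
    filter_upwards [hcond] with ω hω
    simp only [Pi.mul_apply]
    rw [← hω]
    rfl
  have hphib_bd : ∀ ω, |lphi (B * f (X ω))| ≤ B ^ 2 + 1 := by
    intro ω
    rw [abs_of_nonneg (lphi_nonneg _)]
    exact lphi_le (le_of_lt hM) (le_trans (le_abs_self _) (hb_bd ω))
  have hphia_bd : ∀ ω, |lphi (B * f0 (X ω))| ≤ B ^ 2 + 1 := by
    intro ω
    rw [abs_of_nonneg (lphi_nonneg _)]
    exact lphi_le (le_of_lt hM) (le_trans (le_abs_self _) (ha_bd ω))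
  have hint_phib : Integrable (fun ω => lphi (B * f (X ω))) μ :=
    integrable_bdd (continuous_lphi.measurable.comp hbmeas).aestronglyMeasurable _ hphib_bd
  have hint_phia : Integrable (fun ω => lphi (B * f0 (X ω))) μ :=
    integrable_bdd (continuous_lphi.measurable.comp hameas).aestronglyMeasurable _ hphia_bd
  have hint_phidiff : Integrable (fun ω => lphi (B * f (X ω)) - lphi (B * f0 (X ω))) μ :=
    hint_phib.sub hint_phia
  have hint_Yb : Integrable (fun ω => Y ω * (B * f (X ω))) μ :=
    integrable_bdd (hYaesm.mul hbmeas.aestronglyMeasurable) (1 * B ^ 2)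
      (fun ω => by rw [abs_mul]; exact mul_le_mul (hYabs ω) (hb_bd ω) (abs_nonneg _) one_pos.le)
  have hint_Ya : Integrable (fun ω => Y ω * (B * f0 (X ω))) μ :=
    integrable_bdd (hYaesm.mul hameas.aestronglyMeasurable) (1 * B ^ 2)
      (fun ω => by rw [abs_mul]; exact mul_le_mul (hYabs ω) (ha_bd ω) (abs_nonneg _) one_pos.le)
  have hint_Gf :
      Integrable (fun ω => -(Y ω * B * f (X ω)) + Real.log (1 + exp (B * f (X ω)))) μ := by
    have heq : (fun ω => -(Y ω * B * f (X ω)) + Real.log (1 + exp (B * f (X ω))))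
        = fun ω => -(Y ω * (B * f (X ω))) + lphi (B * f (X ω)) := by
      funext ω; simp only [lphi]; ring
    rw [heq]
    exact hint_Yb.neg.add hint_phib
  have hint_Gf0 :
      Integrable (fun ω => -(Y ω * B * f0 (X ω)) + Real.log (1 + exp (B * f0 (X ω)))) μ := by
    have heq : (fun ω => -(Y ω * B * f0 (X ω)) + Real.log (1 + exp (B * f0 (X ω))))
        = fun ω => -(Y ω * (B * f0 (X ω))) + lphi (B * f0 (X ω)) := by
      funext ω; simp only [lphi]; ring
    rw [heq]
    exact hint_Ya.neg.add hint_phia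
  have hint_K : Integrable (fun ω => (lphi (B * f (X ω)) - lphi (B * f0 (X ω)))
      - (B * f (X ω) - B * f0 (X ω)) * lsig (B * f0 (X ω))) μ :=
    hint_phidiff.sub hint_balsig
  have hrepr : (∫ ω, (-(Y ω * B * f (X ω)) + Real.log (1 + exp (B * f (X ω)))) ∂μ) -
      (∫ ω, (-(Y ω * B * f0 (X ω)) + Real.log (1 + exp (B * f0 (X ω)))) ∂μ)
      = ∫ ω, ((lphi (B * f (X ω)) - lphi (B * f0 (X ω)))
          - (B * f (X ω) - B * f0 (X ω)) * lsig (B * f0 (X ω))) ∂μ := by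
    rw [← integral_sub hint_Gf hint_Gf0]
    have heq : (fun ω => (-(Y ω * B * f (X ω)) + Real.log (1 + exp (B * f (X ω)))) -
        (-(Y ω * B * f0 (X ω)) + Real.log (1 + exp (B * f0 (X ω)))))
        = fun ω => (lphi (B * f (X ω)) - lphi (B * f0 (X ω)))
          - (B * f (X ω) - B * f0 (X ω)) * Y ω := by
      funext ω; simp only [lphi]; ring
    rw [heq, integral_sub hint_phidiff hint_baY, key_int,
      ← integral_sub hint_phidiff hint_balsig]
  have hd2_int : Integrable (fun ω => (f (X ω) - f0 (X ω)) ^ 2) μ := by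
    apply integrable_bdd (hdmeas.pow_const 2).aestronglyMeasurable ((B + 1) ^ 2)
    intro ω
    have h1 : |f (X ω) - f0 (X ω)| ≤ B + 1 :=
      calc |f (X ω) - f0 (X ω)| ≤ |f (X ω)| + |f0 (X ω)| := abs_sub _ _
        _ ≤ B + 1 := add_le_add (hfbdd _) (hf0bdd _)
    calc |(f (X ω) - f0 (X ω)) ^ 2| = |f (X ω) - f0 (X ω)| ^ 2 := abs_pow _ _
      _ ≤ (B + 1) ^ 2 := by nlinarith [abs_nonneg (f (X ω) - f0 (X ω))]
  have hpt := fun ω => key_bounds hM (ha_bd ω) (hb_bd ω)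
  constructor
  · rw [hrepr, ← integral_const_mul]
    apply integral_mono (hd2_int.const_mul _) hint_K
    intro ω
    have h1 := (hpt ω).1
    calc B ^ 2 / (2 * (exp (B ^ 2) + exp (-(B ^ 2)) + 2)) * (f (X ω) - f0 (X ω)) ^ 2
        = 1 / (2 * (exp (B ^ 2) + exp (-(B ^ 2)) + 2)) * (B * f (X ω) - B * f0 (X ω)) ^ 2 := by
          ring
      _ ≤ lphi (B * f (X ω)) - lphi (B * f0 (X ω))
          - lsig (B * f0 (X ω)) * (B * f (X ω) - B * f0 (X ω)) := h1
      _ = (lphi (B * f (X ω)) - lphi (B * f0 (X ω)))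
          - (B * f (X ω) - B * f0 (X ω)) * lsig (B * f0 (X ω)) := by ring
  · rw [hrepr, ← integral_const_mul]
    apply integral_mono hint_K (hd2_int.const_mul _)
    intro ω
    have h2 := (hpt ω).2
    calc (lphi (B * f (X ω)) - lphi (B * f0 (X ω)))
          - (B * f (X ω) - B * f0 (X ω)) * lsig (B * f0 (X ω))
        = lphi (B * f (X ω)) - lphi (B * f0 (X ω))
          - lsig (B * f0 (X ω)) * (B * f (X ω) - B * f0 (X ω)) := by ring
      _ ≤ 1 / 8 * (B * f (X ω) - B * f0 (X ω)) ^ 2 := h2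
      _ ≤ B ^ 2 / 4 * (f (X ω) - f0 (X ω)) ^ 2 := by
          nlinarith [sq_nonneg (f (X ω) - f0 (X ω)), sq_nonneg B]
end
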